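/- arXiv:2504.14646 — 2 statements merged into one kernel-verified Lean document; each statement's English description precedes it below -/
import Mathlib

section
/- Let Q be a finite right Bol loop of odd order. Then C(Q) ∩ Nucₗ(Q) = Z(Q); in particular, every element that commutes with all elements of Q and lies in the left nucleus also lies in the middle and right nuclei. -/
/-- A loop: a set with binary operation and identity element in which all left and
right translations are bijective. -/
class QLoop (Q : Type*) extends Mul Q, One Q where
  one_mul : ∀ x : Q, 1 * x = x
  mul_one : ∀ x : Q, x * 1 = x
  bij_left : ∀ a : Q, Function.Bijective (fun x : Q => a * x)
  bij_right : ∀ a : Q, Function.Bijective (fun x : Q => x * a)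

/-- The right Bol identity. -/
def IsRightBol (Q : Type*) [QLoop Q] : Prop :=
  ∀ x y z : Q, ((x * y) * z) * y = x * ((y * z) * y)

/-- Left translation as a permutation. -/
noncomputable def Lt {Q : Type*} [QLoop Q] (a : Q) : Equiv.Perm Q :=
  Equiv.ofBijective (fun x : Q => a * x) (QLoop.bij_left a)

/-- Right translation as a permutation. -/
noncomputable def Rt {Q : Type*} [QLoop Q] (a : Q) : Equiv.Perm Q :=
  Equiv.ofBijective (fun x : Q => x * a) (QLoop.bij_right a)

/-- The right multiplication group. -/
noncomputable def rightMultGroup (Q : Type*) [QLoop Q] : Subgroup (Equiv.Perm Q) :=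
  Subgroup.closure (Set.range (Rt : Q → Equiv.Perm Q))

/-- The right inner mapping group, generated by R_{x,y} = R_{y x}⁻¹ ∘ R_x ∘ R_y. -/
noncomputable def rightInn (Q : Type*) [QLoop Q] : Subgroup (Equiv.Perm Q) :=
  Subgroup.closure { φ : Equiv.Perm Q | ∃ x y : Q, φ = (Rt (y * x))⁻¹ * Rt x * Rt y }

/-- The inner mapping group, generated by R_{x,y}, L_{x,y} and T_x. -/
noncomputable def innGroup (Q : Type*) [QLoop Q] : Subgroup (Equiv.Perm Q) :=
  Subgroup.closure
    ({ φ : Equiv.Perm Q | ∃ x y : Q, φ = (Rt (y * x))⁻¹ * Rt x * Rt y } ∪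
     { φ : Equiv.Perm Q | ∃ x y : Q, φ = (Lt (x * y))⁻¹ * Lt x * Lt y } ∪
     { φ : Equiv.Perm Q | ∃ x : Q, φ = (Lt x)⁻¹ * Rt x })

/-- A subloop: contains 1, closed under multiplication and both divisions. -/
structure IsSubloop {Q : Type*} [QLoop Q] (S : Set Q) : Prop where
  one_mem : (1 : Q) ∈ S
  mul_mem : ∀ ⦃a b : Q⦄, a ∈ S → b ∈ S → a * b ∈ S
  ldiv_mem : ∀ ⦃a x : Q⦄, a ∈ S → a * x ∈ S → x ∈ S
  rdiv_mem : ∀ ⦃a y : Q⦄, a ∈ S → y * a ∈ S → y ∈ S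

/-- A normal subloop: a subloop invariant under all inner mappings. -/
def IsNormalSubloop {Q : Type*} [QLoop Q] (S : Set Q) : Prop :=
  IsSubloop S ∧ ∀ φ ∈ innGroup Q, (φ : Equiv.Perm Q) '' S = S

/-- The commutant. -/
def commutant (Q : Type*) [QLoop Q] : Set Q := { a : Q | ∀ y : Q, a * y = y * a }

/-- The left nucleus. -/
def leftNucleus (Q : Type*) [QLoop Q] : Set Q :=
  { a : Q | ∀ y z : Q, a * (y * z) = (a * y) * z }

/-- The center. -/
def loopCenter (Q : Type*) [QLoop Q] : Set Q :=
  { a : Q | ∀ y z : Q, a * y = y * a ∧ a * (y * z) = (a * y) * z ∧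
      y * (a * z) = (y * a) * z ∧ y * (z * a) = (y * z) * a }

/-- Powers: x^0 = 1, x^{n+1} = x^n * x. -/
def lpow {Q : Type*} [QLoop Q] (x : Q) : ℕ → Q
  | 0 => 1
  | n + 1 => lpow x n * x

/-- The subloop generated by an element. -/
def subloopClosure {Q : Type*} [QLoop Q] (x : Q) : Set Q :=
  ⋂₀ { S : Set Q | IsSubloop S ∧ x ∈ S }

/-- Power associativity: the subloop generated by any element is associative. -/
def PowerAssociative (Q : Type*) [QLoop Q] : Prop :=
  ∀ x : Q, ∀ a ∈ subloopClosure x, ∀ b ∈ subloopClosure x, ∀ c ∈ subloopClosure x,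
    a * (b * c) = (a * b) * c

section Stmt9Aux

variable {Q : Type*} [QLoop Q]

private lemma q_left_cancel {a x y : Q} (h : a * x = a * y) : x = y :=
  (QLoop.bij_left a).injective h

private lemma right_alt (hbol : IsRightBol Q) (x y : Q) : (x * y) * y = x * (y * y) := by
  have h := hbol x y 1
  rwa [QLoop.mul_one, QLoop.mul_one] at h

private lemma one_center : (1 : Q) ∈ loopCenter Q := by
  intro y z
  refine ⟨by rw [QLoop.one_mul, QLoop.mul_one], by rw [QLoop.one_mul, QLoop.one_mul], ?_, ?_⟩
  · rw [QLoop.one_mul, QLoop.mul_one]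
  · rw [QLoop.mul_one, QLoop.mul_one]

private lemma center_subset {a : Q} (ha : a ∈ loopCenter Q) :
    a ∈ commutant Q ∩ leftNucleus Q :=
  ⟨fun y => (ha y 1).1, fun y z => (ha y z).2.1⟩

private lemma center_mul {z w : Q} (hz : z ∈ loopCenter Q) (hw : w ∈ loopCenter Q) :
    z * w ∈ loopCenter Q := by
  have Cz : ∀ y : Q, z * y = y * z := fun y => (hz y 1).1
  have Nlz : ∀ y u : Q, z * (y * u) = (z * y) * u := fun y u => (hz y u).2.1
  have Nmz : ∀ y u : Q, y * (z * u) = (y * z) * u := fun y u => (hz y u).2.2.1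
  have Nrz : ∀ y u : Q, y * (u * z) = (y * u) * z := fun y u => (hz y u).2.2.2
  have Cw : ∀ y : Q, w * y = y * w := fun y => (hw y 1).1
  have Nlw : ∀ y u : Q, w * (y * u) = (w * y) * u := fun y u => (hw y u).2.1
  have Nmw : ∀ y u : Q, y * (w * u) = (y * w) * u := fun y u => (hw y u).2.2.1
  have Nrw : ∀ y u : Q, y * (u * w) = (y * u) * w := fun y u => (hw y u).2.2.2
  intro y u
  refine ⟨?_, ?_, ?_, ?_⟩
  · calc (z * w) * y = z * (w * y) := (Nlz w y).symm
      _ = z * (y * w) := by rw [Cw y]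
      _ = (z * y) * w := Nlz y w
      _ = (y * z) * w := by rw [Cz y]
      _ = y * (z * w) := (Nmz y w).symm
  · calc (z * w) * (y * u) = z * (w * (y * u)) := (Nlz w (y * u)).symm
      _ = z * ((w * y) * u) := by rw [Nlw y u]
      _ = (z * (w * y)) * u := Nlz (w * y) u
      _ = ((z * w) * y) * u := by rw [Nlz w y]
  · calc y * ((z * w) * u) = y * (z * (w * u)) := by rw [Nlz w u]
      _ = (y * z) * (w * u) := Nmz y (w * u)
      _ = ((y * z) * w) * u := Nmw (y * z) u
      _ = (y * (z * w)) * u := by rw [Nmz y w]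
  · calc y * (u * (z * w)) = y * ((u * z) * w) := by rw [Nmz u w]
      _ = (y * (u * z)) * w := Nrw y (u * z)
      _ = ((y * u) * z) * w := by rw [Nrz y u]
      _ = (y * u) * (z * w) := (Nmz (y * u) w).symm

private lemma sq_center (hbol : IsRightBol Q) {a : Q}
    (ha : a ∈ commutant Q ∩ leftNucleus Q) : a * a ∈ loopCenter Q := by
  obtain ⟨hc, hl⟩ := ha
  have hc' : ∀ y : Q, a * y = y * a := hc
  have hl' : ∀ y u : Q, a * (y * u) = (a * y) * u := hl
  have comm : ∀ u : Q, (a * a) * u = u * (a * a) := by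
    intro u
    calc (a * a) * u = a * (a * u) := (hl' a u).symm
      _ = a * (u * a) := by rw [hc' u]
      _ = (a * u) * a := hl' u a
      _ = (u * a) * a := by rw [hc' u]
      _ = u * (a * a) := right_alt hbol u a
  have nl : ∀ y u : Q, (a * a) * (y * u) = ((a * a) * y) * u := by
    intro y u
    calc (a * a) * (y * u) = a * (a * (y * u)) := (hl' a (y * u)).symm
      _ = a * ((a * y) * u) := by rw [hl' y u]
      _ = (a * (a * y)) * u := hl' (a * y) u
      _ = ((a * a) * y) * u := by rw [hl' a y]
  have nm : ∀ x u : Q, x * ((a * a) * u) = (x * (a * a)) * u := by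
    intro x u
    have h1 : (a * u) * a = (a * a) * u := by
      calc (a * u) * a = a * (u * a) := (hl' u a).symm
        _ = a * (a * u) := by rw [hc' u]
        _ = (a * a) * u := hl' a u
    have h2 : ((x * a) * u) * a = (x * (a * a)) * u := by
      calc ((x * a) * u) * a = a * ((x * a) * u) := (hc' ((x * a) * u)).symm
        _ = (a * (x * a)) * u := hl' (x * a) u
        _ = ((a * x) * a) * u := by rw [hl' x a]
        _ = ((x * a) * a) * u := by rw [hc' x]
        _ = (x * (a * a)) * u := by rw [right_alt hbol x a]
    calc x * ((a * a) * u) = x * ((a * u) * a) := by rw [h1]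
      _ = ((x * a) * u) * a := (hbol x a u).symm
      _ = (x * (a * a)) * u := h2
  intro y u
  refine ⟨comm y, nl y u, nm y u, ?_⟩
  calc y * (u * (a * a)) = y * ((a * a) * u) := by rw [comm u]
    _ = (y * (a * a)) * u := nm y u
    _ = ((a * a) * y) * u := by rw [comm y]
    _ = (a * a) * (y * u) := (nl y u).symm
    _ = (y * u) * (a * a) := comm (y * u)

private lemma center_mul_cn {z a : Q} (hz : z ∈ loopCenter Q)
    (ha : a ∈ commutant Q ∩ leftNucleus Q) : z * a ∈ commutant Q ∩ leftNucleus Q := by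
  obtain ⟨hc, hl⟩ := ha
  have Cz : ∀ y : Q, z * y = y * z := fun y => (hz y 1).1
  have Nlz : ∀ y u : Q, z * (y * u) = (z * y) * u := fun y u => (hz y u).2.1
  have Nmz : ∀ y u : Q, y * (z * u) = (y * z) * u := fun y u => (hz y u).2.2.1
  constructor
  · intro u
    calc (z * a) * u = z * (a * u) := (Nlz a u).symm
      _ = z * (u * a) := by rw [hc u]
      _ = (z * u) * a := Nlz u a
      _ = (u * z) * a := by rw [Cz u]
      _ = u * (z * a) := (Nmz u a).symm
  · intro y u
    calc (z * a) * (y * u) = z * (a * (y * u)) := (Nlz a (y * u)).symm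
      _ = z * ((a * y) * u) := by rw [hl y u]
      _ = (z * (a * y)) * u := Nlz (a * y) u
      _ = ((z * a) * y) * u := by rw [Nlz a y]

private lemma even_pow_center (hbol : IsRightBol Q) {a : Q}
    (ha : a ∈ commutant Q ∩ leftNucleus Q) : ∀ k, lpow a (2 * k) ∈ loopCenter Q := by
  intro k
  induction k with
  | zero => exact one_center
  | succ k ih =>
    have h2 : 2 * (k + 1) = (2 * k + 1) + 1 := by omega
    rw [h2]
    have e1 : lpow a ((2 * k + 1) + 1) = (lpow a (2 * k) * a) * a := rfl
    rw [e1, ← (ih a a).2.1]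
    exact center_mul ih (sq_center hbol ha)

private lemma pow_cn (hbol : IsRightBol Q) {a : Q}
    (ha : a ∈ commutant Q ∩ leftNucleus Q) :
    ∀ n, lpow a n ∈ commutant Q ∩ leftNucleus Q := by
  intro n
  rcases Nat.even_or_odd n with ⟨k, hk⟩ | ⟨k, hk⟩
  · rw [hk, ← two_mul]
    exact center_subset (even_pow_center hbol ha k)
  · rw [hk]
    have e1 : lpow a (2 * k + 1) = lpow a (2 * k) * a := rfl
    rw [e1]
    exact center_mul_cn (even_pow_center hbol ha k) ha

private lemma lpow_add_aux (hbol : IsRightBol Q) {a : Q}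
    (ha : a ∈ commutant Q ∩ leftNucleus Q) :
    ∀ m n, lpow a m * lpow a n = lpow a (m + n) := by
  intro m n
  induction n with
  | zero => exact QLoop.mul_one _
  | succ n ih =>
    have e1 : lpow a (n + 1) = lpow a n * a := rfl
    have e2 : lpow a (m + (n + 1)) = lpow a (m + n) * a := rfl
    rw [e1, e2, (pow_cn hbol ha m).2 (lpow a n) a, ih]

private lemma exists_pow_eq_one (hbol : IsRightBol Q) [Finite Q] {a : Q}
    (ha : a ∈ commutant Q ∩ leftNucleus Q) : ∃ d, d ≠ 0 ∧ lpow a d = 1 := by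
  obtain ⟨m, n, hmn, he⟩ := Finite.exists_ne_map_eq_of_infinite (lpow a)
  rcases Nat.lt_or_ge m n with h | h
  · refine ⟨n - m, by omega, ?_⟩
    apply q_left_cancel (a := lpow a m)
    rw [lpow_add_aux hbol ha, QLoop.mul_one, he]
    congr 1
    omega
  · refine ⟨m - n, by omega, ?_⟩
    apply q_left_cancel (a := lpow a n)
    rw [lpow_add_aux hbol ha, QLoop.mul_one, ← he]
    congr 1
    omega

private lemma no_involution (hbol : IsRightBol Q) [Finite Q] (hodd : Odd (Nat.card Q))
    {e : Q} (he : e * e = 1) : e = 1 := by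
  by_contra hne
  set f : Q → Q := fun x => x * e with hf
  have hinv : Function.Involutive f := by
    intro x
    show (x * e) * e = x
    rw [right_alt hbol, he, QLoop.mul_one]
  set σ : Equiv.Perm Q := hinv.toPerm f with hσ
  have hσne : σ ≠ 1 := by
    intro hcontra
    have : σ 1 = 1 := by rw [hcontra]; rfl
    have h1 : (1 : Q) * e = 1 := this
    rw [QLoop.one_mul] at h1
    exact hne h1
  have hσ2 : σ ^ 2 = 1 := by
    ext x
    show σ (σ x) = x
    exact hinv x
  have hord : orderOf σ = 2 := orderOf_eq_prime hσ2 hσne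
  set G := Subgroup.zpowers σ with hG
  have hcardG : Nat.card G = 2 ^ 1 := by
    rw [Nat.card_zpowers, hord, pow_one]
  have hpG : IsPGroup 2 G := IsPGroup.of_card hcardG
  have hfix : IsEmpty (MulAction.fixedPoints G Q) := by
    constructor
    rintro ⟨x, hx⟩
    have hxe : x * e = x := hx ⟨σ, Subgroup.mem_zpowers σ⟩
    have : x * e = x * 1 := by rw [QLoop.mul_one]; exact hxe
    exact hne (q_left_cancel this)
  have hmod := hpG.card_modEq_card_fixedPoints Q
  have h0 : Nat.card (MulAction.fixedPoints G Q) = 0 := Nat.card_of_isEmpty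
  rw [h0] at hmod
  have : (2 : ℕ) ∣ Nat.card Q := (Nat.modEq_zero_iff_dvd).mp hmod
  rw [Nat.odd_iff] at hodd
  omega

end Stmt9Aux

/-- In a finite right Bol loop of odd order, the intersection of the
commutant with the left nucleus is the center. -/
theorem stmt9 (Q : Type*) [QLoop Q] [Finite Q] (hbol : IsRightBol Q)
    (hodd : Odd (Nat.card Q)) :
    commutant Q ∩ leftNucleus Q = loopCenter Q := by
  classical
  ext a
  constructor
  · intro ha
    have hex := exists_pow_eq_one hbol ha
    set d := Nat.find hex with hdd
    have hd := Nat.find_spec hex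
    have hdodd : Odd d := by
      rcases Nat.even_or_odd d with hev | h
      · exfalso
        obtain ⟨k, hk⟩ := hev
        have hk0 : k ≠ 0 := by
          intro h0
          exact hd.1 (by omega)
        have he : lpow a k * lpow a k = 1 := by
          rw [lpow_add_aux hbol ha, ← hk]
          exact hd.2
        have h1 : lpow a k = 1 := no_involution hbol hodd he
        have hmin := Nat.find_min hex (show k < d by omega)
        exact hmin ⟨hk0, h1⟩
      · exact h
    obtain ⟨t, ht⟩ := hdodd
    have hb : lpow a (t + 1) * lpow a (t + 1) = a := by
      rw [lpow_add_aux hbol ha]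
      have hsum : (t + 1) + (t + 1) = d + 1 := by omega
      rw [hsum]
      show lpow a d * a = a
      rw [hd.2, QLoop.one_mul]
    have hbZ := sq_center hbol (pow_cn hbol ha (t + 1))
    rw [hb] at hbZ
    exact hbZ
  · intro ha
    exact center_subset ha
end

section
/- Let Q be a finite right Bol loop of odd order. Then the squaring map Q → Q, x ↦ x·x, is a bijection. -/
section stmt16aux
variable {Q : Type*} [QLoop Q]

lemma Rt_apply' (a x : Q) : Rt a x = x * a := rfl

lemma Rt_one' : Rt (1 : Q) = 1 := by
  ext x; simp [Rt_apply', QLoop.mul_one]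

lemma bol_perm' (hbol : IsRightBol Q) (x y : Q) :
    Rt x * Rt y * Rt x = Rt ((x * y) * x) := by
  ext a
  simp only [Equiv.Perm.mul_apply, Rt_apply']
  exact hbol a x y

lemma rt_pow_one' (x : Q) (n : ℕ) : ((Rt x) ^ n) 1 = lpow x n := by
  induction n with
  | zero => rfl
  | succ n ih => rw [pow_succ', Equiv.Perm.mul_apply, ih]; rfl

lemma rt_lpow' (hbol : IsRightBol Q) (x : Q) : ∀ n, Rt (lpow x n) = (Rt x) ^ n
  | 0 => by rw [pow_zero]; exact Rt_one'
  | 1 => by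
      have h1 : lpow x 1 = x := QLoop.one_mul x
      rw [h1, pow_one]
  | (n + 2) => by
      have ih := rt_lpow' hbol x n
      have h1 : Rt x * Rt (lpow x n) * Rt x = (Rt x) ^ (n + 2) := by
        rw [ih]; group
      have h2 : Rt ((x * lpow x n) * x) = (Rt x) ^ (n + 2) := by
        rw [← bol_perm' hbol, h1]
      have h3 : (x * lpow x n) * x = lpow x (n + 2) := by
        have h4 := congrArg (fun f : Equiv.Perm Q => f 1) h2
        simpa [Rt_apply', QLoop.one_mul, rt_pow_one'] using h4
      rw [← h3, h2]

lemma lpow_add' (hbol : IsRightBol Q) (x : Q) (m n : ℕ) :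
    lpow x m * lpow x n = lpow x (m + n) := by
  have h0 : Rt (lpow x n) (lpow x m) = lpow x m * lpow x n := rfl
  rw [← h0, rt_lpow' hbol, ← rt_pow_one' x m, ← Equiv.Perm.mul_apply, ← pow_add, add_comm,
    rt_pow_one']

lemma sq_eq_one' [Finite Q] (hbol : IsRightBol Q) (hodd : Odd (Nat.card Q))
    {z : Q} (hz : z * z = 1) : z = 1 := by
  classical
  have := Fintype.ofFinite Q
  have hsq : (Rt z) ^ (2 ^ 1) = 1 := by
    have h := bol_perm' hbol z 1
    rw [Rt_one', mul_one, QLoop.mul_one, hz, Rt_one'] at h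
    rw [pow_one]
    calc (Rt z) ^ 2 = Rt z * Rt z := sq (Rt z)
    _ = 1 := h
  have hodd' : ¬ (2 ∣ Fintype.card Q) := by
    rw [Nat.card_eq_fintype_card, Nat.odd_iff] at hodd
    omega
  haveI : Fact (Nat.Prime 2) := ⟨Nat.prime_two⟩
  obtain ⟨a, ha⟩ := Equiv.Perm.exists_fixed_point_of_prime hodd' hsq
  have h5 : a * z = a * 1 := by rw [QLoop.mul_one]; exact ha
  exact (QLoop.bij_left a).1 h5

lemma exists_pos_lpow_eq_one' [Finite Q] (hbol : IsRightBol Q) (x : Q) :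
    ∃ k, 0 < k ∧ lpow x k = 1 := by
  obtain ⟨m, n, hne, heq⟩ := Finite.exists_ne_map_eq_of_infinite (lpow x)
  wlog hmn : m < n generalizing m n
  · exact this n m hne.symm heq.symm (by omega)
  refine ⟨n - m, by omega, ?_⟩
  have h1 : lpow x m * lpow x (n - m) = lpow x m * 1 := by
    rw [lpow_add' hbol, QLoop.mul_one]
    rw [show m + (n - m) = n by omega]
    exact heq.symm
  exact (QLoop.bij_left (lpow x m)).1 h1

end stmt16aux

/-- In a finite right Bol loop of odd order, the squaring map is a
bijection. -/
theorem stmt16 (Q : Type*) [QLoop Q] [Finite Q] (hbol : IsRightBol Q)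
    (hodd : Odd (Nat.card Q)) :
    Function.Bijective (fun x : Q => x * x) := by
  have := Fintype.ofFinite Q
  rw [← Finite.surjective_iff_bijective]
  intro b
  obtain ⟨k, hk, hlk⟩ := exists_pos_lpow_eq_one' hbol b
  have key : ∀ k, 0 < k → lpow b k = 1 → ∃ y : Q, y * y = b := by
    intro k
    induction k using Nat.strong_induction_on with
    | _ k ih =>
      intro hk hlk
      rcases Nat.even_or_odd k with ⟨d, hd⟩ | ⟨m, hm⟩
      · have hd0 : 0 < d := by omega
        have : lpow b d * lpow b d = 1 := by
          rw [lpow_add' hbol, ← hd]; exact hlk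
        have hz := sq_eq_one' hbol hodd this
        exact ih d (by omega) hd0 hz
      · refine ⟨lpow b (m + 1), ?_⟩
        rw [lpow_add' hbol]
        have : m + 1 + (m + 1) = k + 1 := by omega
        rw [this, lpow, hlk, QLoop.one_mul]
  obtain ⟨y, hy⟩ := key k hk hlk
  exact ⟨y, hy⟩
end
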